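/- For the asymmetric Hotelling game with exponential rate λ, define H(x) = (1/λ)(1 - e^{-λx}) and M(x) = (1/λ)(1 - e^{-λx}(1 + λx/2)). Suppose x ∈ [ln2/λ, 1] and r ∈ [0,x] satisfies e^{λ(x - 2r)} = (1 + λ(x - r))/2. Then H(r) = M(x - r) + (1/(2λ)) e^{-λ(x - r)}. -/
import Mathlib

/-- For the asymmetric exponential game with rate λ, with
H(x) = (1/λ)(1 - e^{-λx}) and M(x) = (1/λ)(1 - e^{-λx}(1 + λx/2)):
if x ∈ [ln2/λ, 1] and r ∈ [0,x] satisfies e^{λ(x-2r)} = (1 + λ(x-r))/2, then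
H(r) = M(x-r) + (1/(2λ))e^{-λ(x-r)}. -/
theorem stmt17 (lam : ℝ) (hlam : 0 < lam)
    (H M : ℝ → ℝ)
    (hH : ∀ x, H x = (1/lam) * (1 - Real.exp (-(lam * x))))
    (hM : ∀ x, M x = (1/lam) * (1 - Real.exp (-(lam * x)) * (1 + lam * x / 2)))
    (x r : ℝ) (hx : x ∈ Set.Icc (Real.log 2 / lam) 1)
    (hr : r ∈ Set.Icc (0:ℝ) x)
    (heq : Real.exp (lam * (x - 2*r)) = (1 + lam * (x - r)) / 2) :
    H r = M (x - r) + (1/(2*lam)) * Real.exp (-(lam * (x - r))) := by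
  have key : Real.exp (-(lam * r)) =
      Real.exp (-(lam * (x - r))) * Real.exp (lam * (x - 2*r)) := by
    rw [← Real.exp_add]; ring_nf
  rw [hH, hM, key, heq]
  field_simp
  ring
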